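/- There exists a computably enumerable set A ⊆ ℕ whose complement ℕ \ A is hyperimmune (in particular, a hypersimple set exists). -/

import Mathlib

/-- Partial functions `ℕ →. ℕ` computable relative to an oracle `O : ℕ →. ℕ`
(the oracle analogue of `Nat.Partrec`). -/
inductive RecursiveIn' (O : ℕ →. ℕ) : (ℕ →. ℕ) → Prop
  | oracle : RecursiveIn' O O
  | zero : RecursiveIn' O (pure 0)
  | succ : RecursiveIn' O ↑Nat.succ
  | left : RecursiveIn' O ↑fun n : ℕ => n.unpair.1
  | right : RecursiveIn' O ↑fun n : ℕ => n.unpair.2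
  | pair {f g : ℕ →. ℕ} : RecursiveIn' O f → RecursiveIn' O g →
      RecursiveIn' O fun n => Nat.pair <$> f n <*> g n
  | comp {f g : ℕ →. ℕ} : RecursiveIn' O f → RecursiveIn' O g →
      RecursiveIn' O fun n => g n >>= f
  | prec {f g : ℕ →. ℕ} : RecursiveIn' O f → RecursiveIn' O g →
      RecursiveIn' O (Nat.unpaired fun a n =>
        n.rec (f a) fun y IH => do let i ← IH; g (Nat.pair a (Nat.pair y i)))
  | rfind {f : ℕ →. ℕ} : RecursiveIn' O f →
      RecursiveIn' O fun a => Nat.rfind fun n => (fun m => m = 0) <$> f (Nat.pair a n)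

open Classical in
/-- The characteristic function of a set of naturals, as a partial function. -/
noncomputable def Set.chi (A : Set ℕ) : ℕ →. ℕ :=
  fun n => Part.some (if n ∈ A then 1 else 0)

/-- Turing reducibility for sets of naturals. -/
def TRed (A B : Set ℕ) : Prop := RecursiveIn' B.chi A.chi

/-- Turing incomparability. -/
def TIncomp (A B : Set ℕ) : Prop := ¬ TRed A B ∧ ¬ TRed B A

/-- A set is computably enumerable if it is the domain of a partial computable function. -/
def CE (A : Set ℕ) : Prop := ∃ f : ℕ →. ℕ, Partrec f ∧ ∀ n, n ∈ A ↔ (f n).Dom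

/-- Two sets are recursively inseparable if no computable set separates them. -/
def RecInsep (A B : Set ℕ) : Prop :=
  ¬ ∃ D : Set ℕ, ComputablePred (· ∈ D) ∧ A ⊆ D ∧ B ∩ D = ∅

/-- `D` is a separator for the pair `⟨A, B⟩`. -/
def Separator (A B D : Set ℕ) : Prop := A ⊆ D ∧ B ∩ D = ∅

/-- The halting problem `∅′`. -/
def haltingSet : Set ℕ :=
  {e | ((Denumerable.ofNat Nat.Partrec.Code e).eval e).Dom}

/-- The canonical finite set with index `n` (canonical bijective coding of finite sets). -/
def Dfin (n : ℕ) : Finset ℕ := Denumerable.ofNat (Finset ℕ) n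

/-- A set is hyperimmune if it is infinite and there is no computable `f` producing
pairwise disjoint canonical finite sets each meeting the set. -/
def Hyperimmune (B : Set ℕ) : Prop :=
  B.Infinite ∧ ¬ ∃ f : ℕ → ℕ, Computable f ∧
    (∀ m n, m ≠ n → Disjoint (Dfin (f m)) (Dfin (f n))) ∧
    ∀ n, ∃ x ∈ Dfin (f n), x ∈ B


namespace HypSimple

open Nat.Partrec (Code)
open Nat.Partrec.Code

def KK : Set ℕ := {e | ((Denumerable.ofNat Code e).eval 0).Dom}

def chk (s e : ℕ) : Bool := ((Denumerable.ofNat Code e).evaln s 0).isSome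

lemma chk_mono {s t e : ℕ} (h : s ≤ t) (hc : chk s e = true) : chk t e = true := by
  simp only [chk, Option.isSome_iff_exists] at *
  obtain ⟨x, hx⟩ := hc
  exact ⟨x, evaln_mono h hx⟩

lemma chk_sound {s e : ℕ} (hc : chk s e = true) : e ∈ KK := by
  simp only [chk, Option.isSome_iff_exists] at hc
  obtain ⟨x, hx⟩ := hc
  exact Part.dom_iff_mem.2 ⟨x, evaln_sound hx⟩

lemma chk_complete {e : ℕ} (he : e ∈ KK) : ∃ s, chk s e = true := by
  obtain ⟨x, hx⟩ := Part.dom_iff_mem.1 he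
  obtain ⟨s, hs⟩ := evaln_complete.1 hx
  exact ⟨s, by simp only [chk, Option.isSome_iff_exists]; exact ⟨x, hs⟩⟩

lemma KK_infinite : KK.Infinite := by
  apply Set.infinite_of_injective_forall_mem
    (f := fun n : ℕ => Encodable.encode (Nat.Partrec.Code.const n))
  · intro a b h
    exact const_inj (Encodable.encode_injective h)
  · intro n
    show ((Denumerable.ofNat Code _).eval 0).Dom
    rw [Denumerable.ofNat_encode, eval_const]
    trivial

def F : ℕ → List ℕ
  | 0 => []
  | (m+1) => F m ++ (List.range (m+1)).filter (fun e => chk (m+1) e && !(F m).contains e)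

lemma F_prefix {s t : ℕ} (h : s ≤ t) : F s <+: F t := by
  induction t, h using Nat.le_induction with
  | base => exact List.prefix_rfl
  | succ t _ ih => exact ih.trans (List.prefix_append _ _)

lemma F_nodup (s : ℕ) : (F s).Nodup := by
  induction s with
  | zero => exact List.nodup_nil
  | succ m ih =>
    refine List.Nodup.append ih (List.Nodup.filter _ List.nodup_range) ?_
    intro x hx hx'
    have := List.of_mem_filter hx'
    simp only [Bool.and_eq_true, Bool.not_eq_true'] at this
    have hc : (F m).contains x = true := by
      simpa using List.elem_eq_true_of_mem hx
    rw [this.2] at hc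
    exact absurd hc (by simp)

lemma F_mem_KK {e s : ℕ} (he : e ∈ F s) : e ∈ KK := by
  induction s with
  | zero => simp [F] at he
  | succ m ih =>
    rw [F, List.mem_append] at he
    rcases he with h | h
    · exact ih h
    · have := List.of_mem_filter h
      simp only [Bool.and_eq_true] at this
      exact chk_sound this.1

lemma exists_mem_F {e : ℕ} (he : e ∈ KK) : ∃ s, e ∈ F s := by
  obtain ⟨s₀, hs₀⟩ := chk_complete he
  set m := max s₀ e with hm
  by_cases h : e ∈ F m
  · exact ⟨m, h⟩
  · refine ⟨m + 1, ?_⟩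
    rw [F, List.mem_append]
    right
    refine List.mem_filter.2 ⟨List.mem_range.2 ?_, ?_⟩
    · omega
    · simp only [Bool.and_eq_true, Bool.not_eq_true']
      constructor
      · exact chk_mono (le_trans (le_max_left _ _) (Nat.le_succ _)) hs₀
      · simpa using h


open Classical in
lemma length_unbounded (n : ℕ) : ∃ s, n < (F s).length := by
  obtain ⟨T, hTsub, hTcard⟩ := KK_infinite.exists_subset_card_eq (n + 1)
  set g : ℕ → ℕ := fun t => if h : t ∈ KK then Nat.find (exists_mem_F h) else 0 with hg
  refine ⟨T.sup g, ?_⟩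
  have hsub : T ⊆ (F (T.sup g)).toFinset := by
    intro t ht
    have htK : t ∈ KK := hTsub ht
    have h1 : t ∈ F (g t) := by
      rw [hg]; simp only [htK, dif_pos]
      exact Nat.find_spec (exists_mem_F htK)
    have h2 : F (g t) <+: F (T.sup g) := F_prefix (Finset.le_sup ht)
    exact List.mem_toFinset.2 (h2.subset h1)
  have := Finset.card_le_card hsub
  rw [hTcard, List.toFinset_card_of_nodup (F_nodup _)] at this
  omega

noncomputable def stage (n : ℕ) : ℕ := Nat.find (length_unbounded n)

lemma stage_spec (n : ℕ) : n < (F (stage n)).length := Nat.find_spec (length_unbounded n)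

noncomputable def k (n : ℕ) : ℕ := (F (stage n)).getD n 0

lemma k_eq {s n : ℕ} (h : n < (F s).length) : (F s).getD n 0 = k n := by
  rw [k]
  rcases le_total s (stage n) with hle | hle
  · have hp := F_prefix hle
    rw [List.getD_eq_getElem _ _ h, List.getD_eq_getElem _ _ (stage_spec n)]
    exact hp.getElem h
  · have hp := F_prefix hle
    rw [List.getD_eq_getElem _ _ h, List.getD_eq_getElem _ _ (stage_spec n)]
    exact (hp.getElem (stage_spec n)).symm

lemma k_inj : Function.Injective k := by
  intro a b hab
  set s := max (stage a) (stage b) with hs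
  have ha : a < (F s).length :=
    lt_of_lt_of_le (stage_spec a) (F_prefix (le_max_left _ _)).length_le
  have hb : b < (F s).length :=
    lt_of_lt_of_le (stage_spec b) (F_prefix (le_max_right _ _)).length_le
  have h1 : (F s).getD a 0 = (F s).getD b 0 := by rw [k_eq ha, k_eq hb, hab]
  rw [List.getD_eq_getElem _ _ ha, List.getD_eq_getElem _ _ hb] at h1
  exact ((F_nodup s).getElem_inj_iff).1 h1

lemma k_mem (n : ℕ) : k n ∈ KK := by
  have : (F (stage n)).getD n 0 ∈ F (stage n) := by
    rw [List.getD_eq_getElem _ _ (stage_spec n)]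
    exact List.getElem_mem _
  exact F_mem_KK (by rw [← k] at this; exact this)

lemma k_surj {e : ℕ} (he : e ∈ KK) : ∃ n, k n = e := by
  obtain ⟨s, hs⟩ := exists_mem_F he
  obtain ⟨i, hi, hie⟩ := List.mem_iff_getElem.1 hs
  exact ⟨i, by rw [← k_eq hi, List.getD_eq_getElem _ _ hi]; exact hie⟩


lemma chk_primrec : Primrec₂ chk := by
  have h := Nat.Partrec.Code.primrec_evaln
  have : Primrec fun p : ℕ × ℕ =>
      ((p.1, (Denumerable.ofNat Code p.2)), 0) :=
    ((Primrec.fst.pair ((Primrec.ofNat Code).comp Primrec.snd)).pair (Primrec.const 0))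
  exact Primrec.option_isSome.comp (h.comp this)

lemma filter_eq_flatMap (p : ℕ → Bool) (l : List ℕ) :
    l.filter p = l.flatMap (fun a => bif p a then [a] else []) := by
  induction l with
  | nil => rfl
  | cons a l ih =>
    cases h : p a <;> simp [List.filter_cons, h, ih, List.flatMap_cons]

def Fstep (m : ℕ) (IH : List ℕ) : List ℕ :=
  IH ++ (List.range (m+1)).flatMap (fun e =>
    bif chk (m+1) e then (bif decide (IH.idxOf e < IH.length) then [] else [e]) else [])

def F' : ℕ → List ℕ := fun s => Nat.rec [] (fun m IH => Fstep m IH) s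

lemma F'_eq_F : ∀ s, F' s = F s := by
  intro s
  induction s with
  | zero => rfl
  | succ m ih =>
    show Fstep m (F' m) = F (m+1)
    rw [ih, F, Fstep, filter_eq_flatMap]
    congr 1
    have : (fun e => bif chk (m+1) e then
        (bif decide ((F m).idxOf e < (F m).length) then [] else [e]) else ([] : List ℕ))
        = fun e => bif chk (m+1) e && !(F m).contains e then [e] else [] := by
      funext e
      cases hc : chk (m+1) e
      · simp
      · simp only [Bool.true_and, Bool.cond_true]
        by_cases hm : e ∈ F m
        · have h1 : decide ((F m).idxOf e < (F m).length) = true := by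
            simpa [List.idxOf_lt_length_iff] using hm
          have h2 : (F m).contains e = true := by simpa using hm
          simp [h1, h2, hm]
        · have h1 : decide ((F m).idxOf e < (F m).length) = false := by
            simpa [List.idxOf_lt_length_iff] using hm
          have h2 : (F m).contains e = false := by simpa using hm
          simp [h1, h2, hm]
    rw [this]

lemma F_primrec : Primrec F := by
  have hstep : Primrec₂ Fstep := by
    have hrange : Primrec fun p : ℕ × List ℕ => List.range (p.1 + 1) :=
      Primrec.list_range.comp (Primrec.succ.comp Primrec.fst)
    have hinner : Primrec₂ fun (p : ℕ × List ℕ) (e : ℕ) =>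
        bif chk (p.1+1) e then
          (bif decide ((p.2).idxOf e < (p.2).length) then [] else [e]) else ([] : List ℕ) := by
      have hc : Primrec fun q : (ℕ × List ℕ) × ℕ => chk (q.1.1 + 1) q.2 :=
        chk_primrec.comp (Primrec.succ.comp (Primrec.fst.comp Primrec.fst)) Primrec.snd
      have hidx : Primrec fun q : (ℕ × List ℕ) × ℕ =>
          decide ((q.1.2).idxOf q.2 < (q.1.2).length) :=
        PrimrecPred.decide (Primrec.nat_lt.comp
          (Primrec.list_idxOf.comp Primrec.snd (Primrec.snd.comp Primrec.fst))
          (Primrec.list_length.comp (Primrec.snd.comp Primrec.fst)))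
      have hsingle : Primrec fun q : (ℕ × List ℕ) × ℕ => [q.2] :=
        Primrec.list_cons.comp Primrec.snd (Primrec.const [])
      exact Primrec.cond hc (Primrec.cond hidx (Primrec.const []) hsingle) (Primrec.const [])
    exact (Primrec.list_append.comp Primrec.snd (Primrec.list_flatMap hrange hinner)).to₂
  have h := Primrec.nat_rec₁ ([] : List ℕ) hstep
  exact h.of_eq F'_eq_F


lemma k_computable : Computable k := by
  have hp : Partrec fun n : ℕ =>
      (Nat.rfind fun s => Part.some (decide (n < (F s).length))).map fun s => (F s).getD n 0 := by
    have h1 : Computable₂ fun (n s : ℕ) => decide (n < (F s).length) :=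
      (PrimrecPred.decide (Primrec.nat_lt.comp Primrec.fst
        (Primrec.list_length.comp (F_primrec.comp Primrec.snd)))).to_comp
    have h2 : Partrec₂ fun (n s : ℕ) => (Part.some (decide (n < (F s).length)) : Part Bool) :=
      h1.partrec₂
    have h3 : Computable₂ fun (n s : ℕ) => (F s).getD n 0 :=
      ((Primrec.list_getD 0).comp (F_primrec.comp Primrec.snd) Primrec.fst).to_comp
    exact (Partrec.rfind h2).map h3
  apply Partrec.of_eq_tot hp
  intro n
  have hdom : (Nat.rfind fun s => Part.some (decide (n < (F s).length))).Dom := by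
    refine Nat.rfind_dom.2 ?_
    obtain ⟨s, hs⟩ := length_unbounded n
    exact ⟨s, by simpa using hs, fun {m} _ => trivial⟩
  obtain ⟨s, hs⟩ := Part.dom_iff_mem.1 hdom
  have htrue := Nat.rfind_spec hs
  have hlen : n < (F s).length := by simpa using htrue
  rw [Part.mem_map_iff]
  exact ⟨s, hs, k_eq hlen⟩

def A : Set ℕ := {n | ∃ m, n < m ∧ k m < k n}

lemma CE_A : ∃ f : ℕ →. ℕ, Partrec f ∧ ∀ n, n ∈ A ↔ (f n).Dom := by
  refine ⟨fun n => Nat.rfind fun m => Part.some (decide (n < m ∧ k m < k n)), ?_, ?_⟩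
  · apply Partrec.rfind
    apply Computable₂.partrec₂
    have h1 : Computable₂ fun (n m : ℕ) => decide (n < m) := (PrimrecRel.decide Primrec.nat_lt).to_comp
    have h2 : Computable₂ fun (n m : ℕ) => decide (k m < k n) :=
      (PrimrecRel.decide Primrec.nat_lt).to_comp.comp (k_computable.comp Computable.snd)
        (k_computable.comp Computable.fst)
    have h3 : Computable₂ fun (n m : ℕ) => (decide (n < m) && decide (k m < k n)) :=
      (Computable.cond h1 h2 (Computable.const false)).of_eq (fun p => by
        cases h : decide (p.1 < p.2) <;> simp [h])
    apply h3.of_eq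
    rintro ⟨n, m⟩
    simp [Bool.decide_and]
  · intro n
    refine Iff.trans ?_ Nat.rfind_dom.symm
    constructor
    · rintro ⟨m, hm1, hm2⟩
      exact ⟨m, by simpa using And.intro hm1 hm2, fun {l} _ => trivial⟩
    · rintro ⟨m, hm, -⟩
      have : n < m ∧ k m < k n := by simpa using hm
      exact ⟨m, this.1, this.2⟩

lemma mem_compl_A (n : ℕ) : n ∈ Aᶜ ↔ ∀ m, n < m → k n ≤ k m := by
  simp [A, not_lt]

lemma compl_A_infinite : Aᶜ.Infinite := by
  apply Set.infinite_of_not_bddAbove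
  rintro ⟨N, hN⟩
  have hP : ∃ m, N + 1 ≤ m ∧ k m = k (N + 1) := ⟨N + 1, le_refl _, rfl⟩
  set P : ℕ → Prop := fun v => ∃ m, N + 1 ≤ m ∧ k m = v with hPdef
  have hPex : ∃ v, P v := ⟨k (N+1), hP⟩
  classical
  obtain ⟨m₀, hm₀N, hm₀⟩ := Nat.find_spec hPex
  have hmem : m₀ ∈ Aᶜ := by
    rw [mem_compl_A]
    intro m hm
    have : P (k m) := ⟨m, by omega, rfl⟩
    have := Nat.find_min' hPex this
    omega
  have := hN hmem
  omega


lemma add_le_pair (a b : ℕ) : a + b ≤ Nat.pair a b := by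
  rw [Nat.pair]
  split <;> nlinarith

lemma sum_len_le_encode : ∀ l : List ℕ, l.sum + l.length ≤ Encodable.encode l := by
  intro l
  induction l with
  | nil => simp
  | cons a l ih =>
    rw [Encodable.encode_list_cons]
    have : Encodable.encode a = a := rfl
    have h := add_le_pair (Encodable.encode a) (Encodable.encode l)
    simp only [List.sum_cons, List.length_cons, this] at *
    omega

lemma mem_raise'_le : ∀ (l : List ℕ) (n x : ℕ), x ∈ Denumerable.raise' l n →
    x + 1 ≤ n + l.sum + l.length := by
  intro l
  induction l with
  | nil => intro n x hx; simp [Denumerable.raise'] at hx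
  | cons m l ih =>
    intro n x hx
    rw [Denumerable.raise'] at hx
    rcases List.mem_cons.1 hx with h | h
    · subst h; simp; omega
    · have := ih (m + n + 1) x h
      simp only [List.sum_cons, List.length_cons]
      omega

lemma mem_Dfin_le {x n : ℕ} (hx : x ∈ Dfin n) : x ≤ n := by
  have hD : Dfin n = Finset.map (Denumerable.eqv ℕ).symm.toEmbedding
      (Denumerable.raise'Finset (Denumerable.ofNat (List ℕ) n) 0) := by
    rfl
  rw [hD, Finset.mem_map] at hx
  obtain ⟨y, hy, hxy⟩ := hx
  have hyx : y = x := by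
    rw [← hxy]
    show Denumerable.ofNat ℕ y = y
    exact Denumerable.ofNat_nat y
  subst hyx
  have hy' : y ∈ Denumerable.raise' (Denumerable.ofNat (List ℕ) n) 0 := hy
  have h1 := mem_raise'_le _ _ _ hy'
  have h2 := sum_len_le_encode (Denumerable.ofNat (List ℕ) n)
  rw [Denumerable.encode_ofNat] at h2
  omega


set_option maxHeartbeats 1000000 in
theorem not_array : ¬ ∃ f : ℕ → ℕ, Computable f ∧
    (∀ m n, m ≠ n → Disjoint (Dfin (f m)) (Dfin (f n))) ∧
    ∀ n, ∃ x ∈ Dfin (f n), x ∈ Aᶜ := by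
  rintro ⟨f, hf, hdisj, hmeet⟩
  classical
  set M : ℕ → ℕ := fun x => (x+2).rec 0 (fun i IH => max IH (f i)) with hM
  have hMle : ∀ x i, i < x + 2 → f i ≤ M x := by
    intro x
    have key : ∀ j i, i < j → f i ≤ (Nat.rec 0 (fun i IH => max IH (f i)) j : ℕ) := by
      intro j
      induction j with
      | zero => intro i hi; omega
      | succ j ih =>
        intro i hi
        rcases Nat.lt_succ_iff_lt_or_eq.1 hi with h | h
        · exact le_trans (ih i h) (le_max_left _ _)
        · subst h; exact le_max_right _ _
    exact key (x+2)
  have hMcomp : Computable M := by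
    have hh : Computable₂ fun (_ : ℕ) (p : ℕ × ℕ) => max p.2 (f p.1) :=
      (Primrec.nat_max.to_comp.comp (Computable.snd.comp Computable.snd)
        (hf.comp (Computable.fst.comp Computable.snd))).to₂
    exact Computable.nat_rec (f := fun x : ℕ => x + 2) (g := fun _ : ℕ => (0 : ℕ))
      (Computable.succ.comp Computable.succ) (Computable.const 0) hh
  -- the decider
  set c : ℕ → Bool := fun x => (M x + 1).rec false (fun j IH => IH || decide (k j = x)) with hc
  have hc_iff : ∀ x t, ((Nat.rec false (fun j IH => IH || decide (k j = x)) t : Bool) = true)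
      ↔ ∃ j < t, k j = x := by
    intro x t
    induction t with
    | zero => simp
    | succ t ih =>
      show (_ || _) = true ↔ _
      rw [Bool.or_eq_true, ih]
      constructor
      · rintro (⟨j, hj, hjx⟩ | h)
        · exact ⟨j, by omega, hjx⟩
        · exact ⟨t, by omega, of_decide_eq_true h⟩
      · rintro ⟨j, hj, hjx⟩
        rcases Nat.lt_succ_iff_lt_or_eq.1 hj with h | h
        · exact Or.inl ⟨j, h, hjx⟩
        · subst h; exact Or.inr (decide_eq_true hjx)
  have hccomp : Computable c := by
    have hh : Computable₂ fun (x : ℕ) (p : ℕ × Bool) => p.2 || decide (k p.1 = x) := by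
      have h1 : Computable fun q : ℕ × (ℕ × Bool) => decide (k q.2.1 = q.1) :=
        (PrimrecRel.decide Primrec.eq).to_comp.comp (k_computable.comp (Computable.fst.comp Computable.snd))
          Computable.fst
      have := Computable.cond (Computable.snd.comp Computable.snd)
        (Computable.const true) h1
      exact ((this.of_eq (g := fun q : ℕ × ℕ × Bool => q.2.2 || decide (k q.2.1 = q.1))
        (fun q => by cases hq : q.2.2 <;> simp [hq])).to₂)
    exact Computable.nat_rec (f := fun x : ℕ => M x + 1) (g := fun _ : ℕ => false)
      (Computable.succ.comp hMcomp) (Computable.const false) hh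
  -- the key equivalence
  have key : ∀ x, x ∈ KK ↔ ∃ j < M x + 1, k j = x := by
    intro x
    constructor
    · intro hx
      obtain ⟨j₀, hj₀⟩ := k_surj hx
      -- choose elements of Aᶜ in each Dfin (f i)
      choose b hb1 hb2 using hmeet
      have hbinj : Function.Injective b := by
        intro i j hij
        by_contra hne
        exact (Finset.disjoint_left.1 (hdisj i j hne)) (hb1 i) (hij ▸ hb1 j)
      set T : Finset ℕ := (Finset.range (x+2)).image b with hT
      have hTcard : T.card = x + 2 := by
        rw [hT, Finset.card_image_of_injective _ hbinj, Finset.card_range]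
      set U : Finset ℕ := T.image k with hU
      have hUcard : U.card = x + 2 := by
        rw [hU, Finset.card_image_of_injective _ k_inj, hTcard]
      have hbig : ∃ t ∈ T, x < k t := by
        by_contra h
        push_neg at h
        have hsub : U ⊆ Finset.range (x + 1) := by
          intro u hu
          obtain ⟨t, ht, rfl⟩ := Finset.mem_image.1 hu
          exact Finset.mem_range.2 (by have := h t ht; omega)
        have := Finset.card_le_card hsub
        rw [hUcard, Finset.card_range] at this
        omega
      obtain ⟨t, htT, htk⟩ := hbig
      obtain ⟨i, hi, rfl⟩ := Finset.mem_image.1 htT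
      have hiA : b i ∈ Aᶜ := hb2 i
      have hj₀t : j₀ ≤ b i := by
        by_contra h
        push_neg at h
        have := (mem_compl_A (b i)).1 hiA j₀ h
        omega
      have hle : b i ≤ M x := le_trans (mem_Dfin_le (hb1 i)) (hMle x i (Finset.mem_range.1 hi))
      exact ⟨j₀, by omega, hj₀⟩
    · rintro ⟨j, _, rfl⟩
      exact k_mem j
  -- KK is computable, contradiction with the halting problem
  have hKK : ComputablePred (· ∈ KK) := by
    rw [ComputablePred.computable_iff]
    refine ⟨c, hccomp, funext fun x => propext ?_⟩
    rw [key x]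
    exact (hc_iff x (M x + 1)).symm
  have hcode : ComputablePred fun cd : Code => (cd.eval 0).Dom := by
    rw [ComputablePred.computable_iff]
    refine ⟨fun cd => c (Encodable.encode cd), hccomp.comp Computable.encode,
      funext fun cd => propext ?_⟩
    have h1 : (Encodable.encode cd ∈ KK) ↔ (cd.eval 0).Dom := by
      show ((Denumerable.ofNat Code (Encodable.encode cd)).eval 0).Dom ↔ _
      rw [Denumerable.ofNat_encode]
    rw [← h1, key (Encodable.encode cd)]
    exact (hc_iff _ (M _ + 1)).symm
  exact ComputablePred.halting_problem 0 hcode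


end HypSimple

theorem stmt17 : ∃ A : Set ℕ, CE A ∧ Hyperimmune Aᶜ := by
  refine ⟨HypSimple.A, HypSimple.CE_A, HypSimple.compl_A_infinite, HypSimple.not_array⟩
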